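/- Let S₃(x₁,x₂,x₃) = x₁x₂x₃ + x₂x₃x₁ + x₃x₁x₂ − x₁x₃x₂ − x₃x₂x₁ − x₂x₁x₃ be the standard (Amitsur–Levitzki) polynomial of degree 3. For any α, β, γ ∈ ℂ, the diagonal matrix diag(α, β, γ) lies in the image of S₃ on M₃(ℂ)³. Explicitly, diag(α,β,γ) = S₃(N, L, D) where N is the 3×3 nilpotent Jordan block (ones on the superdiagonal), L is the matrix with L₂₁ = 2, L₃₂ = 1 and zeros elsewhere, and D = (1/6)·diag(5α/2 − 2β + γ, 2(α − 2β + γ), α − 2β − 2γ). -/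

import Mathlib

open Matrix

/-- every diagonal `3×3` matrix `diag(α,β,γ)` is an explicit value of the
standard polynomial `S₃`. -/
theorem diag_in_image_S3 (α β γ : ℂ)
    (S3 : Matrix (Fin 3) (Fin 3) ℂ → Matrix (Fin 3) (Fin 3) ℂ → Matrix (Fin 3) (Fin 3) ℂ →
      Matrix (Fin 3) (Fin 3) ℂ)
    (hS3 : ∀ A B C, S3 A B C =
      A * B * C + B * C * A + C * A * B - A * C * B - C * B * A - B * A * C) :
    !![α, 0, 0; 0, β, 0; 0, 0, γ] =
      S3 !![0, 1, 0; 0, 0, 1; 0, 0, 0] !![0, 0, 0; 2, 0, 0; 0, 1, 0]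
        ((1 / 6 : ℂ) •
          !![5 * α / 2 - 2 * β + γ, 0, 0;
             0, 2 * (α - 2 * β + γ), 0;
             0, 0, α - 2 * β - 2 * γ]) := by
  rw [hS3]
  simp only [Matrix.smul_of, Matrix.smul_cons, smul_eq_mul, Matrix.smul_empty,
    Matrix.mul_fin_three]
  norm_num
  refine ⟨⟨?_, Subsingleton.elim _ _⟩, ⟨?_, Subsingleton.elim _ _⟩, ⟨?_, Subsingleton.elim _ _⟩,
    Subsingleton.elim _ _⟩ <;> ring
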